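/- arXiv:2407.12760 — 4 statements merged into one kernel-verified Lean document; each statement's English description precedes it below -/
import Mathlib

section
/- For every natural number D there exists a constant C > 0 depending only on D with the following property: if p is a real polynomial of degree at most D with p(0) = 0, and T > 0 is such that |p(t)| ≤ 1 for all t ∈ [0, T], then for every t₁ with 0 ≤ t₁ ≤ T and every t ∈ [0, t₁] one has |p(t)| ≤ C · t₁ / T. -/
open Polynomial Finset

/-- Rescaling estimate for real polynomials vanishing at `0`: if `|p| ≤ 1` on `[0, T]`,
then for `0 ≤ t₁ ≤ T` one has `|p(t)| ≤ C · t₁ / T` for all `t ∈ [0, t₁]`,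
with `C` depending only on the degree bound `D`. -/
theorem polynomial_rescaling_bound (D : ℕ) :
    ∃ C : ℝ, 0 < C ∧
      ∀ p : Polynomial ℝ, p.natDegree ≤ D → p.eval 0 = 0 →
        ∀ T : ℝ, 0 < T → (∀ t ∈ Set.Icc (0 : ℝ) T, |p.eval t| ≤ 1) →
          ∀ t₁ : ℝ, 0 ≤ t₁ → t₁ ≤ T →
            ∀ t ∈ Set.Icc (0 : ℝ) t₁, |p.eval t| ≤ C * t₁ / T := by
  classical
  set s : Finset ℕ := Finset.range (D + 1) with hs
  set v : ℕ → ℝ := fun i => (i : ℝ) / D with hv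
  have hinj : Set.InjOn v s := by
    intro i hi j hj h
    rcases Nat.eq_zero_or_pos D with hD | hD
    · simp [hs, hD] at hi hj
      omega
    · have hD' : (D : ℝ) ≠ 0 := Nat.cast_ne_zero.mpr hD.ne'
      simp only [hv, div_left_inj' hD'] at h
      exact_mod_cast h
  set M : ℝ := ∑ k ∈ s, ∑ j ∈ s, |(Lagrange.basis s v j).coeff k| with hM
  have hM0 : 0 ≤ M := by
    apply Finset.sum_nonneg; intro k _; apply Finset.sum_nonneg; intro j _; positivity
  refine ⟨M + 1, by linarith, ?_⟩
  intro p hdeg hp0 T hT hbd t₁ ht₁0 ht₁T t ht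
  set q : Polynomial ℝ := p.comp (Polynomial.C T * Polynomial.X) with hq
  have hqeval : ∀ x : ℝ, q.eval x = p.eval (T * x) := by
    intro x; simp [hq]
  have hqdeg : q.natDegree ≤ D := by
    rw [hq, Polynomial.natDegree_comp]
    have : (Polynomial.C T * Polynomial.X : Polynomial ℝ).natDegree = 1 := by
      simpa using Polynomial.natDegree_C_mul_X T hT.ne'
    rw [this, mul_one]; exact hdeg
  have hqdeg' : q.degree < (#s : ℕ) := by
    have h1 : q.degree ≤ (D : WithBot ℕ) :=
      le_trans Polynomial.degree_le_natDegree (by exact_mod_cast hqdeg)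
    have h2 : (#s : ℕ) = D + 1 := by simp [hs]
    rw [h2]
    exact lt_of_le_of_lt h1 (by exact_mod_cast Nat.lt_succ_self D)
  -- node values bounded by 1
  have hnode : ∀ j ∈ s, |q.eval (v j)| ≤ 1 := by
    intro j hj
    rw [hqeval]
    apply hbd
    have hj' : j ≤ D := by simp [hs] at hj; omega
    constructor
    · have : 0 ≤ v j := by positivity
      positivity
    · rcases Nat.eq_zero_or_pos D with hD | hD
      · simp [hv, hD]; positivity
      · have hD' : (0:ℝ) < D := by exact_mod_cast hD
        have hv1 : v j ≤ 1 := by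
          rw [hv, div_le_one hD']
          exact_mod_cast hj'
        calc T * v j ≤ T * 1 := by
              apply mul_le_mul_of_nonneg_left hv1 hT.le
          _ = T := mul_one T
  -- coefficient bound
  have hcoeff : ∑ k ∈ s, |q.coeff k| ≤ M := by
    have hrep := Lagrange.eq_interpolate hinj hqdeg'
    rw [hM]
    apply Finset.sum_le_sum
    intro k _
    conv_lhs => rw [hrep]
    rw [Lagrange.interpolate_apply, Polynomial.finset_sum_coeff]
    refine le_trans (Finset.abs_sum_le_sum_abs _ _) (Finset.sum_le_sum ?_)
    intro j hj
    rw [Polynomial.coeff_C_mul, abs_mul]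
    calc |q.eval (v j)| * |(Lagrange.basis s v j).coeff k|
        ≤ 1 * |(Lagrange.basis s v j).coeff k| :=
          mul_le_mul_of_nonneg_right (hnode j hj) (abs_nonneg _)
      _ = _ := one_mul _
  -- q.coeff 0 = 0
  have hq0 : q.coeff 0 = 0 := by
    rw [Polynomial.coeff_zero_eq_eval_zero, hqeval, mul_zero, hp0]
  obtain ⟨ht0, htt₁⟩ := ht
  set σ : ℝ := t / T with hσ
  have hσ0 : 0 ≤ σ := div_nonneg ht0 hT.le
  have hσ1 : σ ≤ 1 := by
    rw [hσ, div_le_one hT]; linarith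
  have hσt : σ ≤ t₁ / T := by
    rw [hσ]; gcongr
  have hpt : p.eval t = q.eval σ := by
    rw [hqeval, hσ, mul_div_cancel₀]
    exact hT.ne'
  rw [hpt]
  have hsum : q.eval σ = ∑ k ∈ s, q.coeff k * σ ^ k := by
    rw [hs]
    exact Polynomial.eval_eq_sum_range' (lt_of_le_of_lt hqdeg (Nat.lt_succ_self D)) σ
  have key : |q.eval σ| ≤ σ * M := by
    rw [hsum]
    calc |∑ k ∈ s, q.coeff k * σ ^ k| ≤ ∑ k ∈ s, |q.coeff k * σ ^ k| :=
          Finset.abs_sum_le_sum_abs _ _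
      _ ≤ ∑ k ∈ s, |q.coeff k| * σ := by
          apply Finset.sum_le_sum
          intro k _
          rw [abs_mul]
          rcases Nat.eq_zero_or_pos k with hk | hk
          · simp [hk, hq0]
          · have : |σ ^ k| ≤ σ := by
              rw [abs_pow, abs_of_nonneg hσ0]
              calc σ ^ k ≤ σ ^ 1 := pow_le_pow_of_le_one hσ0 hσ1 hk
                _ = σ := pow_one σ
            exact mul_le_mul_of_nonneg_left this (abs_nonneg _)
      _ = (∑ k ∈ s, |q.coeff k|) * σ := by rw [Finset.sum_mul]
      _ ≤ M * σ := mul_le_mul_of_nonneg_right hcoeff hσ0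
      _ = σ * M := mul_comm _ _
  calc |q.eval σ| ≤ σ * M := key
    _ ≤ (t₁ / T) * M := mul_le_mul_of_nonneg_right hσt hM0
    _ ≤ (t₁ / T) * (M + 1) := by
        apply mul_le_mul_of_nonneg_left (by linarith) (div_nonneg ht₁0 hT.le)
    _ = (M + 1) * t₁ / T := by ring
end

section
/- Let E be a finite-dimensional real inner product space, G a group, and ρ : G → GL(E) a linear representation of G on E. Call a linear subspace V ⊆ E invariant if ρ(g)(V) ⊆ V for all g ∈ G. Assume that every invariant subspace of E admits an invariant complement (i.e. an invariant subspace W with V ⊕ W = E). Then there exists a constant κ > 0 such that for every invariant subspace V ⊆ E there exists an invariant complement W ⊆ E (so V ⊕ W = E) satisfying ‖v + w‖² ≥ κ (‖v‖² + ‖w‖²) for all v ∈ V and w ∈ W. -/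
open scoped RealInnerProductSpace

/-- Any complementary pair in a finite-dimensional space has some positive distortion bound. -/
lemma aux_base_distortion {E : Type*} [NormedAddCommGroup E] [InnerProductSpace ℝ E]
    [FiniteDimensional ℝ E] (V W : Submodule ℝ E) (h : IsCompl V W) :
    ∃ c : ℝ, 0 < c ∧ ∀ v ∈ V, ∀ w ∈ W, c * (‖v‖ ^ 2 + ‖w‖ ^ 2) ≤ ‖v + w‖ ^ 2 := by
  let e : (V × W) ≃L[ℝ] E := (Submodule.prodEquivOfIsCompl V W h).toContinuousLinearEquiv
  set C := ‖(e.symm : E →L[ℝ] V × W)‖ + 1 with hC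
  have hC0 : 0 < C := by positivity
  refine ⟨1 / (2 * C ^ 2), by positivity, ?_⟩
  intro v hv w hw
  have hE2 : e (⟨v, hv⟩, ⟨w, hw⟩) = v + w := by
    have : e (⟨v, hv⟩, ⟨w, hw⟩) = (Submodule.prodEquivOfIsCompl V W h) (⟨v, hv⟩, ⟨w, hw⟩) := rfl
    rw [this]
    simp [Submodule.coe_prodEquivOfIsCompl']
  have hE : e.symm (v + w) = (⟨v, hv⟩, ⟨w, hw⟩) := by
    rw [← hE2, e.symm_apply_apply]
  have hle : ‖e.symm (v + w)‖ ≤ C * ‖v + w‖ := by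
    calc ‖e.symm (v + w)‖ ≤ ‖(e.symm : E →L[ℝ] V × W)‖ * ‖v + w‖ :=
          (e.symm : E →L[ℝ] V × W).le_opNorm _
      _ ≤ C * ‖v + w‖ := by
          apply mul_le_mul_of_nonneg_right _ (norm_nonneg _)
          simp [hC]
  rw [hE] at hle
  have hv' : ‖v‖ ≤ C * ‖v + w‖ := by
    have h1 : ‖((⟨v, hv⟩, ⟨w, hw⟩) : V × W).1‖ ≤ ‖((⟨v, hv⟩, ⟨w, hw⟩) : V × W)‖ := norm_fst_le _
    simpa using h1.trans hle
  have hw' : ‖w‖ ≤ C * ‖v + w‖ := by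
    have h1 : ‖((⟨v, hv⟩, ⟨w, hw⟩) : V × W).2‖ ≤ ‖((⟨v, hv⟩, ⟨w, hw⟩) : V × W)‖ := norm_snd_le _
    simpa using h1.trans hle
  have h2 : ‖v‖ ^ 2 + ‖w‖ ^ 2 ≤ 2 * C ^ 2 * ‖v + w‖ ^ 2 := by
    nlinarith [norm_nonneg v, norm_nonneg w, norm_nonneg (v + w)]
  rw [div_mul_eq_mul_div, one_mul, div_le_iff₀ (by positivity)]
  linarith

set_option maxHeartbeats 1000000 in
/-- Local stability of an invariant complement with a quantitative distortion bound. -/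
lemma aux_local {E : Type*} [NormedAddCommGroup E] [InnerProductSpace ℝ E]
    [FiniteDimensional ℝ E] (V W : Submodule ℝ E) (hVW : IsCompl V W)
    (P : E →L[ℝ] E) (hPid : ∀ x ∈ V, P x = x) (hPmem : ∀ x, P x ∈ V) :
    ∃ ε : ℝ, 0 < ε ∧ ∃ κ : ℝ, 0 < κ ∧ ∀ (P' : E →L[ℝ] E) (V' : Submodule ℝ E),
      (∀ x ∈ V', P' x = x) → (∀ x, P' x ∈ V') → ‖P' - P‖ < ε →
      IsCompl V' W ∧ ∀ v ∈ V', ∀ w ∈ W, κ * (‖v‖ ^ 2 + ‖w‖ ^ 2) ≤ ‖v + w‖ ^ 2 := by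
  obtain ⟨c, hc, hdist⟩ := aux_base_distortion V W hVW
  set Q : E →L[ℝ] E :=
    LinearMap.toContinuousLinearMap (V.subtype ∘ₗ (V.projectionOnto W hVW)) with hQ
  have hQV : ∀ x, Q x ∈ V := fun x => by
    show (V.subtype ∘ₗ (V.projectionOnto W hVW)) x ∈ V
    simp
  have hQid : ∀ x ∈ V, Q x = x := by
    intro x hx
    show (V.subtype ∘ₗ (V.projectionOnto W hVW)) x = x
    simp only [LinearMap.comp_apply, Submodule.subtype_apply]
    rw [show x = ((⟨x, hx⟩ : V) : E) from rfl, Submodule.projectionOnto_apply_left]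
  have hQW : ∀ x, x - Q x ∈ W := by
    intro x
    have hx : x ∈ V ⊔ W := by rw [hVW.sup_eq_top]; trivial
    obtain ⟨v, hv, w, hw, rfl⟩ := Submodule.mem_sup.mp hx
    have : Q (v + w) = v := by
      show (V.subtype ∘ₗ (V.projectionOnto W hVW)) (v + w) = v
      simp only [LinearMap.comp_apply, Submodule.subtype_apply, map_add]
      rw [show v = ((⟨v, hv⟩ : V) : E) from rfl, show w = ((⟨w, hw⟩ : W) : E) from rfl,
        Submodule.projectionOnto_apply_left, Submodule.projectionOnto_apply_right]
      simp
    rw [this]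
    simpa using hw
  set q := ‖Q‖ with hq
  have hq0 : 0 ≤ q := norm_nonneg _
  set ε := min (1 / (2 * (q + 1))) (min (Real.sqrt c / 4) (1 / 2)) with hε
  have hsc : 0 < Real.sqrt c := Real.sqrt_pos.mpr hc
  have hε0 : 0 < ε := by
    apply lt_min (by positivity) (lt_min (by positivity) (by norm_num))
  have hε1 : ε ≤ 1 / (2 * (q + 1)) := min_le_left _ _
  have hε2 : ε ≤ Real.sqrt c / 4 := (min_le_right _ _).trans (min_le_left _ _)
  have hε3 : ε ≤ 1 / 2 := (min_le_right _ _).trans (min_le_right _ _)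
  refine ⟨ε, hε0, c / 16, by positivity, ?_⟩
  intro P' V' hP'id hP'mem hlt
  -- distortion bound
  have hdist' : ∀ v' ∈ V', ∀ w ∈ W, c / 16 * (‖v'‖ ^ 2 + ‖w‖ ^ 2) ≤ ‖v' + w‖ ^ 2 := by
    intro v' hv' w hw
    set v := P v' with hv
    have hvV : v ∈ V := hPmem v'
    have h1 : ‖v' - v‖ ≤ ε * ‖v'‖ := by
      have hveq : v' - v = (P' - P) v' := by
        simp [hv, ContinuousLinearMap.sub_apply, hP'id v' hv']
      rw [hveq]
      calc ‖(P' - P) v'‖ ≤ ‖P' - P‖ * ‖v'‖ := (P' - P).le_opNorm v'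
        _ ≤ ε * ‖v'‖ := mul_le_mul_of_nonneg_right hlt.le (norm_nonneg _)
    have h2 : ‖v'‖ / 2 ≤ ‖v‖ := by
      have h3 := norm_sub_norm_le v' v
      nlinarith [norm_nonneg v']
    set S := ‖v'‖ ^ 2 + ‖w‖ ^ 2 with hS
    have hS0 : 0 ≤ S := by positivity
    have hbase : Real.sqrt c * Real.sqrt (‖v‖ ^ 2 + ‖w‖ ^ 2) ≤ ‖v + w‖ := by
      have h4 := hdist v hvV w hw
      have h5 : Real.sqrt (c * (‖v‖ ^ 2 + ‖w‖ ^ 2)) ≤ Real.sqrt (‖v + w‖ ^ 2) :=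
        Real.sqrt_le_sqrt h4
      rwa [Real.sqrt_mul hc.le, Real.sqrt_sq (norm_nonneg _)] at h5
    have h6 : Real.sqrt S / 2 ≤ Real.sqrt (‖v‖ ^ 2 + ‖w‖ ^ 2) := by
      have h7 : Real.sqrt (S / 4) ≤ Real.sqrt (‖v‖ ^ 2 + ‖w‖ ^ 2) := by
        apply Real.sqrt_le_sqrt
        nlinarith [norm_nonneg v', norm_nonneg v]
      have h7' : Real.sqrt (S / 4) = Real.sqrt S / 2 := by
        rw [show (4 : ℝ) = 2 ^ 2 by norm_num, Real.sqrt_div hS0,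
          Real.sqrt_sq (by norm_num : (0:ℝ) ≤ 2)]
      rwa [h7'] at h7
    have h8 : ‖v'‖ ≤ Real.sqrt S := by
      rw [show ‖v'‖ = Real.sqrt (‖v'‖ ^ 2) from (Real.sqrt_sq (norm_nonneg _)).symm]
      apply Real.sqrt_le_sqrt
      nlinarith [sq_nonneg ‖w‖]
    have h9 : ‖v + w‖ - ε * ‖v'‖ ≤ ‖v' + w‖ := by
      have h10 : ‖v + w‖ ≤ ‖v' + w‖ + ‖v' - v‖ := by
        have : v + w = (v' + w) - (v' - v) := by abel
        rw [this]
        exact norm_sub_le _ _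
      linarith
    have h11 : Real.sqrt c * (Real.sqrt S / 2) ≤ Real.sqrt c * Real.sqrt (‖v‖ ^ 2 + ‖w‖ ^ 2) :=
      mul_le_mul_of_nonneg_left h6 hsc.le
    have h12 : ε * ‖v'‖ ≤ Real.sqrt c / 4 * Real.sqrt S := by
      calc ε * ‖v'‖ ≤ (Real.sqrt c / 4) * ‖v'‖ := mul_le_mul_of_nonneg_right hε2 (norm_nonneg _)
        _ ≤ Real.sqrt c / 4 * Real.sqrt S := mul_le_mul_of_nonneg_left h8 (by positivity)
    have h13 : Real.sqrt c / 4 * Real.sqrt S ≤ ‖v' + w‖ := by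
      nlinarith
    have h14 : (Real.sqrt c / 4 * Real.sqrt S) ^ 2 ≤ ‖v' + w‖ ^ 2 := by
      apply pow_le_pow_left₀ (by positivity) h13
    have h15 : (Real.sqrt c / 4 * Real.sqrt S) ^ 2 = c / 16 * S := by
      rw [mul_pow, div_pow, Real.sq_sqrt hc.le, Real.sq_sqrt hS0]
      ring
    rw [h15] at h14
    exact h14
  constructor
  · constructor
    · -- Disjoint
      rw [Submodule.disjoint_def]
      intro x hxV hxW
      have h := hdist' x hxV (-x) (Submodule.neg_mem W hxW)
      rw [add_neg_cancel, norm_zero, norm_neg] at h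
      have hx2 : ‖x‖ ^ 2 ≤ 0 := by nlinarith
      have : ‖x‖ = 0 := by nlinarith [norm_nonneg x]
      exact norm_eq_zero.mp this
    · -- Codisjoint
      rw [codisjoint_iff, eq_top_iff]
      intro x _
      set T : E →L[ℝ] E := (P' - P).comp Q with hT
      have hTnorm : ‖-T‖ < 1 := by
        rw [norm_neg]
        have hlt' : ‖P' - P‖ < 1 / (2 * (q + 1)) := hlt.trans_le hε1
        have hcomp : ‖T‖ ≤ ‖P' - P‖ * q := ContinuousLinearMap.opNorm_comp_le _ _
        have h2 : ‖P' - P‖ * q ≤ (1 / (2 * (q + 1))) * q :=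
          mul_le_mul_of_nonneg_right hlt'.le hq0
        have h3 : (1 / (2 * (q + 1))) * q < 1 := by
          rw [div_mul_eq_mul_div, one_mul, div_lt_one (by positivity)]
          nlinarith
        linarith
      set u : (E →L[ℝ] E)ˣ := Units.oneSub (-T) hTnorm with hu
      set y := (↑u⁻¹ : E →L[ℝ] E) x with hy
      have hxy : (↑u : E →L[ℝ] E) y = x := by
        rw [hy, ← ContinuousLinearMap.mul_apply, u.mul_inv, ContinuousLinearMap.one_apply]
      have huval : (↑u : E →L[ℝ] E) = 1 + T := by
        rw [hu, Units.val_oneSub, sub_neg_eq_add]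
      have hxdec : x = P' (Q y) + (y - Q y) := by
        have hPQ : P (Q y) = Q y := hPid _ (hQV y)
        rw [← hxy, huval]
        simp only [ContinuousLinearMap.add_apply, ContinuousLinearMap.one_apply, hT,
          ContinuousLinearMap.comp_apply, ContinuousLinearMap.sub_apply, hPQ]
        abel
      rw [hxdec]
      exact Submodule.add_mem_sup (hP'mem (Q y)) (hQW y)
  · exact hdist'

set_option maxHeartbeats 1000000 in
/-- Existence of undistorted invariant complements: if every invariant subspace of a
finite-dimensional real inner product space `E` (under a representation `ρ` of a group `G`)
admits an invariant complement, then there is `κ > 0` such that every invariant subspace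
admits an invariant complement `W` with `‖v + w‖² ≥ κ (‖v‖² + ‖w‖²)` for `v ∈ V`, `w ∈ W`. -/
theorem exists_undistorted_invariant_complement
    {E : Type*} [NormedAddCommGroup E] [InnerProductSpace ℝ E] [FiniteDimensional ℝ E]
    {G : Type*} [Group G] (ρ : G →* (E ≃ₗ[ℝ] E))
    (hcompl : ∀ V : Submodule ℝ E, (∀ g : G, ∀ v ∈ V, ρ g v ∈ V) →
      ∃ W : Submodule ℝ E, (∀ g : G, ∀ w ∈ W, ρ g w ∈ W) ∧ IsCompl V W) :
    ∃ κ : ℝ, 0 < κ ∧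
      ∀ V : Submodule ℝ E, (∀ g : G, ∀ v ∈ V, ρ g v ∈ V) →
        ∃ W : Submodule ℝ E, (∀ g : G, ∀ w ∈ W, ρ g w ∈ W) ∧ IsCompl V W ∧
          ∀ v ∈ V, ∀ w ∈ W, κ * (‖v‖ ^ 2 + ‖w‖ ^ 2) ≤ ‖v + w‖ ^ 2 := by
  classical
  set K : Set (E →L[ℝ] E) :=
    {P | ∀ x, P (P x) = P x} ∩ {P | ∀ g x, P (ρ g (P x)) = ρ g (P x)} ∩ Metric.closedBall 0 1
    with hK
  -- K is compact
  have hKcompact : IsCompact K := by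
    apply (isCompact_closedBall (0 : E →L[ℝ] E) 1).of_isClosed_subset
    · apply IsClosed.inter ?_ Metric.isClosed_closedBall
      apply IsClosed.inter
      · have : {P : E →L[ℝ] E | ∀ x, P (P x) = P x} = ⋂ x, {P : E →L[ℝ] E | P (P x) = P x} := by
          ext P; simp
        rw [this]
        refine isClosed_iInter fun x => isClosed_eq ?_ ?_
        · exact continuous_id.clm_apply (continuous_id.clm_apply continuous_const)
        · exact continuous_id.clm_apply continuous_const
      · have : {P : E →L[ℝ] E | ∀ g x, P (ρ g (P x)) = ρ g (P x)} =
            ⋂ g, ⋂ x, {P : E →L[ℝ] E | P (ρ g (P x)) = ρ g (P x)} := by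
          ext P; simp
        rw [this]
        refine isClosed_iInter fun g => isClosed_iInter fun x => isClosed_eq ?_ ?_
        · have hcont : Continuous fun P : E →L[ℝ] E => ρ g (P x) :=
            (LinearMap.continuous_of_finiteDimensional
              ((ρ g : E ≃ₗ[ℝ] E) : E →ₗ[ℝ] E)).comp
              (continuous_id.clm_apply continuous_const)
          exact continuous_id.clm_apply hcont
        · exact (LinearMap.continuous_of_finiteDimensional
            ((ρ g : E ≃ₗ[ℝ] E) : E →ₗ[ℝ] E)).comp
            (continuous_id.clm_apply continuous_const)
    · exact fun P hP => hP.2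
  -- local data for each P in K
  have hloc : ∀ P : K, ∃ W : Submodule ℝ E, (∀ g : G, ∀ w ∈ W, ρ g w ∈ W) ∧
      ∃ ε : ℝ, 0 < ε ∧ ∃ κ : ℝ, 0 < κ ∧ ∀ (P' : E →L[ℝ] E) (V' : Submodule ℝ E),
        (∀ x ∈ V', P' x = x) → (∀ x, P' x ∈ V') → ‖P' - (P : E →L[ℝ] E)‖ < ε →
        IsCompl V' W ∧ ∀ v ∈ V', ∀ w ∈ W, κ * (‖v‖ ^ 2 + ‖w‖ ^ 2) ≤ ‖v + w‖ ^ 2 := by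
    rintro ⟨P, hPK⟩
    have hPidem : ∀ x, P (P x) = P x := hPK.1.1
    have hPinv : ∀ g x, P (ρ g (P x)) = ρ g (P x) := hPK.1.2
    set Vp : Submodule ℝ E := LinearMap.range (P : E →ₗ[ℝ] E) with hVp
    have hfix : ∀ v, v ∈ Vp ↔ P v = v := by
      intro v
      constructor
      · rintro ⟨y, rfl⟩; exact hPidem y
      · intro h; exact ⟨v, h⟩
    have hVinv : ∀ g : G, ∀ v ∈ Vp, ρ g v ∈ Vp := by
      intro g v hv
      rw [hfix] at hv ⊢
      rw [← hv]
      exact hPinv g v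
    obtain ⟨W, hWinv, hWcompl⟩ := hcompl Vp hVinv
    obtain ⟨ε, hε0, κ, hκ0, hmain⟩ := aux_local Vp W hWcompl P
      (fun x hx => (hfix x).mp hx) (fun x => ⟨x, rfl⟩)
    exact ⟨W, hWinv, ε, hε0, κ, hκ0, hmain⟩
  choose Wf hWinv εf hε0 κf hκ0 hmain using hloc
  -- finite subcover
  have hcover : K ⊆ ⋃ P : K, Metric.ball (P : E →L[ℝ] E) (εf P) := by
    intro P hP
    exact Set.mem_iUnion.mpr ⟨⟨P, hP⟩, Metric.mem_ball_self (hε0 ⟨P, hP⟩)⟩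
  obtain ⟨t, ht⟩ := hKcompact.elim_finite_subcover
    (fun P : K => Metric.ball (P : E →L[ℝ] E) (εf P)) (fun P => Metric.isOpen_ball) hcover
  set s : Finset ℝ := insert (1 : ℝ) (t.image κf) with hs
  have hsne : s.Nonempty := Finset.insert_nonempty _ _
  set κ₀ := s.min' hsne with hκ₀
  have hκ₀pos : 0 < κ₀ := by
    rw [hκ₀, Finset.lt_min'_iff]
    intro b hb
    rcases Finset.mem_insert.mp hb with h | h
    · rw [h]; norm_num
    · obtain ⟨P, _, rfl⟩ := Finset.mem_image.mp h
      exact hκ0 P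
  have hκ₀le : ∀ P ∈ t, κ₀ ≤ κf P := fun P hP =>
    Finset.min'_le _ _ (Finset.mem_insert_of_mem (Finset.mem_image_of_mem _ hP))
  refine ⟨κ₀, hκ₀pos, ?_⟩
  intro V hVinv
  -- the orthogonal projection onto V
  set Pv : E →L[ℝ] E := V.subtypeL.comp (Submodule.orthogonalProjection V) with hPv
  have hPvmem : ∀ x, Pv x ∈ V := fun x => (Submodule.orthogonalProjection V x).2
  have hPvid : ∀ x ∈ V, Pv x = x := by
    intro x hx
    show (V.subtypeL (Submodule.orthogonalProjection V x) : E) = x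
    rw [show x = ((⟨x, hx⟩ : V) : E) from rfl, Submodule.orthogonalProjection_mem_subspace_eq_self]
    rfl
  have hPvK : Pv ∈ K := by
    refine ⟨⟨fun x => hPvid _ (hPvmem x), fun g x => hPvid _ (hVinv g _ (hPvmem x))⟩, ?_⟩
    rw [Metric.mem_closedBall, dist_zero_right]
    apply ContinuousLinearMap.opNorm_le_bound _ (by norm_num)
    intro x
    rw [one_mul]
    calc ‖Pv x‖ = ‖Submodule.orthogonalProjection V x‖ := rfl
      _ ≤ ‖Submodule.orthogonalProjection V‖ * ‖x‖ := (Submodule.orthogonalProjection V).le_opNorm x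
      _ ≤ 1 * ‖x‖ := mul_le_mul_of_nonneg_right (Submodule.orthogonalProjectionOnto_norm_le V) (norm_nonneg _)
      _ = ‖x‖ := one_mul _
  obtain ⟨P, hPt, hPball⟩ := Set.mem_iUnion₂.mp (ht hPvK)
  have hnorm : ‖Pv - (P : E →L[ℝ] E)‖ < εf P := by
    rw [← dist_eq_norm]
    exact Metric.mem_ball.mp hPball
  obtain ⟨hcompl', hdist'⟩ := hmain P Pv V hPvid hPvmem hnorm
  refine ⟨Wf P, hWinv P, hcompl', ?_⟩
  intro v hv w hw
  calc κ₀ * (‖v‖ ^ 2 + ‖w‖ ^ 2) ≤ κf P * (‖v‖ ^ 2 + ‖w‖ ^ 2) :=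
        mul_le_mul_of_nonneg_right (hκ₀le P hPt) (by positivity)
    _ ≤ ‖v + w‖ ^ 2 := hdist' v hv w hw
end

section
/- Let V be a finite-dimensional vector space over ℚ with dim V ≥ 3, and let Q : V → ℚ be a quadratic form whose polar bilinear form B(v, w) = Q(v + w) − Q(v) − Q(w) is nondegenerate. Suppose W ⊆ V is a linear subspace such that f(W) ⊆ W for every linear automorphism f of V satisfying det f = 1 and Q(f v) = Q(v) for all v ∈ V. Then W = {0} or W = V. -/
open QuadraticMap Module

section Aux

variable {V : Type*} [AddCommGroup V] [Module ℚ V]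

/-- Determinant of a rank-one perturbation of the identity. -/
private theorem det_id_sub_smulRight [FiniteDimensional ℚ V] (f : V →ₗ[ℚ] ℚ) (u : V) :
    LinearMap.det (LinearMap.id - f.smulRight u) = 1 - f u := by
  classical
  let b := Module.finBasis ℚ V
  rw [← LinearMap.det_toMatrix b, _root_.map_sub, LinearMap.toMatrix_id]
  have hmat : LinearMap.toMatrix b b (f.smulRight u)
      = Matrix.replicateCol (Fin 1) (fun i => b.repr u i) * Matrix.replicateRow (Fin 1) (fun j => f (b j)) := by
    ext i j
    simp [LinearMap.toMatrix_apply, Matrix.mul_apply, mul_comm]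
  rw [hmat, Matrix.det_one_sub_mul_comm, Matrix.det_unique]
  have hu : f u = ∑ j, b.repr u j * f (b j) := by
    conv_lhs => rw [← b.sum_repr u]
    rw [map_sum]
    simp [mul_comm]
  simp [Matrix.mul_apply, hu, mul_comm]

/-- The reflection in an anisotropic vector `u`, as a linear map. -/
private noncomputable def qrefl (Q : QuadraticForm ℚ V) (u : V) : V →ₗ[ℚ] V :=
  LinearMap.id - ((Q u)⁻¹ • (polarBilin Q).flip u).smulRight u

private theorem qrefl_apply (Q : QuadraticForm ℚ V) (u x : V) :
    qrefl Q u x = x - ((Q u)⁻¹ * polar Q x u) • u := by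
  simp [qrefl, smul_smul]

private theorem polar_eval (Q : QuadraticForm ℚ V) (x y : V) :
    Q (x + y) = Q x + Q y + polar Q x y := by
  simp [QuadraticMap.polar]

private theorem polar_self_eq (Q : QuadraticForm ℚ V) (u : V) :
    polar Q u u = 2 * Q u := by
  rw [QuadraticMap.polar_self]
  rw [two_smul]
  ring

private theorem qrefl_isometry (Q : QuadraticForm ℚ V) {u : V} (hu : Q u ≠ 0) (x : V) :
    Q (qrefl Q u x) = Q x := by
  rw [qrefl_apply, sub_eq_add_neg, ← neg_smul, polar_eval, QuadraticMap.map_smul,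
    polar_smul_right]
  simp only [smul_eq_mul]
  have h : (Q u)⁻¹ * Q u = 1 := inv_mul_cancel₀ hu
  linear_combination ((Q u)⁻¹ * polar Q x u * polar Q x u) * h

private theorem qrefl_invol (Q : QuadraticForm ℚ V) {u : V} (hu : Q u ≠ 0) (x : V) :
    qrefl Q u (qrefl Q u x) = x := by
  rw [qrefl_apply, qrefl_apply, polar_sub_left, polar_smul_left, polar_self_eq Q u]
  match_scalars
  · ring
  · field_simp
    ring_nf
    rw [mul_inv_cancel_right₀ hu]
    ring

private theorem qrefl_det [FiniteDimensional ℚ V] (Q : QuadraticForm ℚ V) {u : V}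
    (hu : Q u ≠ 0) : LinearMap.det (qrefl Q u) = -1 := by
  rw [qrefl, det_id_sub_smulRight]
  have : ((Q u)⁻¹ • (polarBilin Q).flip u) u = (Q u)⁻¹ * polar Q u u := by
    simp [smul_eq_mul]
  rw [this, polar_self_eq Q u]
  field_simp
  ring

end Aux

/-- Irreducibility of the standard representation of the special orthogonal group of a
nondegenerate rational quadratic form in dimension at least `3`: a subspace invariant
under all determinant-one isometries of `Q` is trivial. -/
theorem standard_rep_irreducible {V : Type*} [AddCommGroup V] [Module ℚ V]
    [FiniteDimensional ℚ V] (hdim : 3 ≤ Module.finrank ℚ V)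
    (Q : QuadraticForm ℚ V)
    (hnd : ∀ v : V, (∀ w : V, Q (v + w) - Q v - Q w = 0) → v = 0)
    (W : Submodule ℚ V)
    (hW : ∀ f : V ≃ₗ[ℚ] V, LinearMap.det (f : V →ₗ[ℚ] V) = 1 →
      (∀ v : V, Q (f v) = Q v) → ∀ w ∈ W, f w ∈ W) :
    W = ⊥ ∨ W = ⊤ := by
  by_cases hbot : W = ⊥
  · exact Or.inl hbot
  right
  -- nondegeneracy in terms of the polar form
  have hnd' : ∀ v : V, (∀ w : V, polar Q v w = 0) → v = 0 := by
    intro v hv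
    refine hnd v fun w => ?_
    have := hv w
    simpa [QuadraticMap.polar] using this
  have hnd'' : ∀ v : V, v ≠ 0 → ∃ w : V, polar Q v w ≠ 0 := by
    intro v hv
    by_contra h
    push_neg at h
    exact hv (hnd' v h)
  -- the subspace is invariant under products of two reflections
  have key : ∀ u v : V, Q u ≠ 0 → Q v ≠ 0 → ∀ w ∈ W, qrefl Q u (qrefl Q v w) ∈ W := by
    intro u v hu hv w hw
    set g : V ≃ₗ[ℚ] V := LinearEquiv.ofLinear (qrefl Q u ∘ₗ qrefl Q v) (qrefl Q v ∘ₗ qrefl Q u)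
      (by ext x; simp [qrefl_invol Q hv, qrefl_invol Q hu])
      (by ext x; simp [qrefl_invol Q hv, qrefl_invol Q hu]) with hg
    have hdet : LinearMap.det (g : V →ₗ[ℚ] V) = 1 := by
      have : (g : V →ₗ[ℚ] V) = qrefl Q u ∘ₗ qrefl Q v := rfl
      rw [this, LinearMap.det_comp, qrefl_det Q hu, qrefl_det Q hv]
      norm_num
    have hiso : ∀ x : V, Q (g x) = Q x := by
      intro x
      have : g x = qrefl Q u (qrefl Q v x) := rfl
      rw [this, qrefl_isometry Q hu, qrefl_isometry Q hv]
    exact hW g hdet hiso w hw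
  -- there is an anisotropic vector
  have hV : Nontrivial V :=
    Module.nontrivial_of_finrank_pos (R := ℚ) (by omega)
  have F0 : ∃ z : V, Q z ≠ 0 := by
    by_contra h
    push_neg at h
    obtain ⟨v, hv⟩ := exists_ne (0 : V)
    refine hv (hnd' v fun w => ?_)
    simp [QuadraticMap.polar, h]
  -- every vector has an anisotropic vector orthogonal to it (uses dim ≥ 3)
  have F1 : ∀ x : V, ∃ v : V, Q v ≠ 0 ∧ polar Q x v = 0 := by
    intro x
    by_contra h
    push_neg at h
    -- h : ∀ v, Q v ≠ 0 → polar Q x v ≠ 0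
    set K : Submodule ℚ V := LinearMap.ker (polarBilin Q x) with hK
    have hQK : ∀ v ∈ K, Q v = 0 := by
      intro v hv
      by_contra hQv
      exact h v hQv (by simpa [hK, polarBilin] using hv)
    have hPK : ∀ v ∈ K, ∀ w ∈ K, polar Q v w = 0 := by
      intro v hv w hw
      have hvw : v + w ∈ K := K.add_mem hv hw
      have : polar Q v w = Q (v + w) - Q v - Q w := by simp [QuadraticMap.polar]
      rw [this, hQK v hv, hQK w hw, hQK _ hvw]
      ring
    have hrankK : 2 ≤ Module.finrank ℚ K := by
      have h1 := LinearMap.finrank_range_add_finrank_ker (polarBilin Q x)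
      rw [← hK] at h1
      have h2 : Module.finrank ℚ (LinearMap.range (polarBilin Q x)) ≤ 1 := by
        simpa using Submodule.finrank_le (LinearMap.range (polarBilin Q x))
      omega
    -- pick a nonzero element of K and a vector not orthogonal to it
    have hKnt : Nontrivial K :=
      Module.nontrivial_of_finrank_pos (R := ℚ) (by omega)
    obtain ⟨⟨k₀, hk₀K⟩, hk₀ne⟩ := exists_ne (0 : K)
    have hk₀ : k₀ ≠ 0 := by
      intro hcon
      exact hk₀ne (Subtype.ext hcon)
    obtain ⟨y, hy⟩ := hnd'' k₀ hk₀
    have hxy : polar Q x y ≠ 0 := by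
      intro hcon
      exact hy (hPK k₀ hk₀K y (by simpa [hK, polarBilin] using hcon))
    -- the map k ↦ polar Q k y is injective on K
    set φ : K →ₗ[ℚ] ℚ := ((polarBilin Q).flip y).comp K.subtype with hφ
    have hφinj : Function.Injective φ := by
      rw [← LinearMap.ker_eq_bot]
      rw [Submodule.eq_bot_iff]
      rintro ⟨k, hkK⟩ hker
      have hky : polar Q k y = 0 := by simpa [hφ, polarBilin] using hker
      refine Subtype.ext ?_
      refine hnd' k fun w => ?_
      have hxw : w - ((polar Q x w) / (polar Q x y)) • y ∈ K := by
        simp only [hK, LinearMap.mem_ker]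
        have : (polarBilin Q x) (w - (polar Q x w / polar Q x y) • y)
            = polar Q x w - (polar Q x w / polar Q x y) * polar Q x y := by
          simp [polarBilin, polar_sub_right, polar_smul_right, smul_eq_mul]
        rw [this]
        field_simp
        ring
      have h1 : polar Q k (w - (polar Q x w / polar Q x y) • y) = 0 :=
        hPK k hkK _ hxw
      have h2 : polar Q k (w - (polar Q x w / polar Q x y) • y)
          = polar Q k w - (polar Q x w / polar Q x y) * polar Q k y := by
        rw [polar_sub_right, polar_smul_right, smul_eq_mul]
      rw [h2, hky] at h1
      linarith
    have : Module.finrank ℚ K ≤ Module.finrank ℚ ℚ :=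
      LinearMap.finrank_le_finrank_of_injective hφinj
    rw [Module.finrank_self] at this
    omega
  -- KEY: from a member of W we can produce anisotropic vectors in W
  have KEY : ∀ x ∈ W, ∀ u : V, Q u ≠ 0 → polar Q x u ≠ 0 → u ∈ W := by
    intro x hx u hu hxu
    obtain ⟨v, hv, hxv⟩ := F1 x
    have h1 : qrefl Q v x = x := by
      rw [qrefl_apply, hxv]
      simp
    have h2 : qrefl Q u (qrefl Q v x) ∈ W := key u v hu hv x hx
    rw [h1, qrefl_apply] at h2
    have h3 : ((Q u)⁻¹ * polar Q x u) • u ∈ W := by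
      have := W.sub_mem hx h2
      simpa using this
    have hc : (Q u)⁻¹ * polar Q x u ≠ 0 := by
      exact mul_ne_zero (inv_ne_zero hu) hxu
    have := W.smul_mem ((Q u)⁻¹ * polar Q x u)⁻¹ h3
    rwa [smul_smul, inv_mul_cancel₀ hc, one_smul] at this
  -- Step 1: W contains an anisotropic vector
  obtain ⟨x, hxW, hx0⟩ := Submodule.exists_mem_ne_zero_of_ne_bot hbot
  obtain ⟨y, hy⟩ := hnd'' x hx0
  obtain ⟨z, hz⟩ := F0
  have step1 : ∃ u ∈ W, Q u ≠ 0 := by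
    by_cases hQy : Q y ≠ 0
    · exact ⟨y, KEY x hxW y hQy hy, hQy⟩
    push_neg at hQy
    by_cases hxz : polar Q x z ≠ 0
    · exact ⟨z, KEY x hxW z hz hxz, hz⟩
    push_neg at hxz
    have hsum : Q (y + z) + Q (y - z) = 2 * Q z := by
      have h1 : Q (y + z) = Q y + Q z + polar Q y z := polar_eval Q y z
      have h2 : Q (y - z) = Q y + Q z - polar Q y z := by
        rw [sub_eq_add_neg, polar_eval, QuadraticMap.map_neg, polar_neg_right]
        ring
      rw [h1, h2, hQy]
      ring
    by_cases h1 : Q (y + z) ≠ 0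
    · have hpol : polar Q x (y + z) ≠ 0 := by
        rw [polar_add_right, hxz, add_zero]
        exact hy
      exact ⟨y + z, KEY x hxW _ h1 hpol, h1⟩
    · push_neg at h1
      have h2 : Q (y - z) ≠ 0 := by
        rw [h1, zero_add] at hsum
        rw [hsum]
        intro hcon
        exact hz (by linarith [mul_ne_zero (two_ne_zero (α := ℚ)) hz])
      have hpol : polar Q x (y - z) ≠ 0 := by
        rw [polar_sub_right, hxz, sub_zero]
        exact hy
      exact ⟨y - z, KEY x hxW _ h2 hpol, h2⟩
  obtain ⟨u, huW, hu⟩ := step1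
  -- Step 2: every anisotropic vector is in W
  have step2 : ∀ p : V, Q p ≠ 0 → p ∈ W := by
    intro p hp
    by_cases hup : polar Q u p ≠ 0
    · exact KEY u huW p hp hup
    push_neg at hup
    have hpu : polar Q p u = 0 := by rw [polar_comm]; exact hup
    by_cases h1 : Q (p + u) ≠ 0
    · have hpol : polar Q u (p + u) ≠ 0 := by
        rw [polar_add_right, hup, zero_add, polar_self_eq Q u]
        exact mul_ne_zero two_ne_zero hu
      have : p + u ∈ W := KEY u huW _ h1 hpol
      have := W.sub_mem this huW
      simpa using this
    · push_neg at h1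
      have hQpu : Q p + Q u = 0 := by
        have := polar_eval Q p u
        rw [h1, hpu] at this
        linarith
      have h2 : Q (p + (2 : ℚ) • u) ≠ 0 := by
        have : Q (p + (2 : ℚ) • u) = Q p + 4 * Q u + 2 * polar Q p u := by
          rw [polar_eval, QuadraticMap.map_smul, polar_smul_right, smul_eq_mul, smul_eq_mul]
          ring
        rw [this, hpu]
        intro hcon
        have : Q u = 0 := by linarith
        exact hu this
      have hpol : polar Q u (p + (2 : ℚ) • u) ≠ 0 := by
        rw [polar_add_right, hup, zero_add, polar_smul_right, polar_self_eq Q u, smul_eq_mul]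
        intro hcon
        exact hu (by linarith)
      have hv : p + (2 : ℚ) • u ∈ W := KEY u huW _ h2 hpol
      have := W.sub_mem hv (W.smul_mem (2 : ℚ) huW)
      simpa using this
  -- Step 3: W = ⊤
  rw [Submodule.eq_top_iff']
  intro w
  by_cases hw : Q w ≠ 0
  · exact step2 w hw
  push_neg at hw
  have hsum : Q (w + u) + Q (w - u) = 2 * Q u := by
    have h1 : Q (w + u) = Q w + Q u + polar Q w u := polar_eval Q w u
    have h2 : Q (w - u) = Q w + Q u - polar Q w u := by
      rw [sub_eq_add_neg, polar_eval, QuadraticMap.map_neg, polar_neg_right]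
      ring
    rw [h1, h2, hw]
    ring
  by_cases h1 : Q (w + u) ≠ 0
  · have : w + u ∈ W := step2 _ h1
    have := W.sub_mem this huW
    simpa using this
  · push_neg at h1
    have h2 : Q (w - u) ≠ 0 := by
      rw [h1, zero_add] at hsum
      rw [hsum]
      exact mul_ne_zero two_ne_zero hu
    have : w - u ∈ W := step2 _ h2
    have := W.add_mem this huW
    simpa using this
end

section
/- Let V be a finite-dimensional vector space over ℚ with dim V ≥ 3, and let Q : V → ℚ be a quadratic form whose polar bilinear form B(v, w) = Q(v + w) − Q(v) − Q(w) is nondegenerate. Suppose T : V → V is a ℚ-linear map that commutes with every linear automorphism f of V satisfying det f = 1 and Q(f v) = Q(v) for all v ∈ V (i.e. T ∘ f = f ∘ T for all such f). Then T is a scalar multiple of the identity map of V. -/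
open QuadraticMap Module

section Aux

variable {V : Type*} [AddCommGroup V] [Module ℚ V]

private theorem Qexp (Q : QuadraticForm ℚ V) (x y : V) (a : ℚ) :
    Q (x + a • y) = Q x + a * polar Q x y + a * a * Q y := by
  have h : Q (x + a • y) = polar Q x (a • y) + Q x + Q (a • y) := by
    rw [QuadraticMap.polar]; ring
  rw [h, polar_smul_right, QuadraticMap.map_smul]
  simp only [smul_eq_mul]; ring

private theorem det_prodMap' {M₁ M₂ : Type*} [AddCommGroup M₁] [Module ℚ M₁]
    [FiniteDimensional ℚ M₁] [AddCommGroup M₂] [Module ℚ M₂] [FiniteDimensional ℚ M₂]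
    (φ₁ : M₁ →ₗ[ℚ] M₁) (φ₂ : M₂ →ₗ[ℚ] M₂) :
    LinearMap.det (φ₁.prodMap φ₂) = LinearMap.det φ₁ * LinearMap.det φ₂ := by
  classical
  let b₁ := Module.finBasis ℚ M₁
  let b₂ := Module.finBasis ℚ M₂
  rw [← LinearMap.det_toMatrix (b₁.prod b₂), LinearMap.toMatrix_prodMap,
    Matrix.det_fromBlocks_zero₂₁, LinearMap.det_toMatrix, LinearMap.det_toMatrix]

/-- The key geometric step: `T` commuting with the rotation by `π` in the plane spanned by
orthogonal anisotropic vectors `v, w` forces `T v ∈ span {v, w}`. -/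
private theorem aux_mem_span [FiniteDimensional ℚ V]
    (Q : QuadraticForm ℚ V) (T : V →ₗ[ℚ] V)
    (hT : ∀ f : V ≃ₗ[ℚ] V, LinearMap.det (f : V →ₗ[ℚ] V) = 1 →
      (∀ v : V, Q (f v) = Q v) → ∀ v : V, T (f v) = f (T v))
    (v w : V) (hv : Q v ≠ 0) (hw : Q w ≠ 0) (hvw : polar Q v w = 0) :
    T v ∈ Submodule.span ℚ {v, w} := by
  classical
  have hwv : polar Q w v = 0 := (polar_comm _ _ _).trans hvw
  set f : V →ₗ[ℚ] V :=
    LinearMap.id - (((Q v)⁻¹ • (polarBilin Q v)).smulRight v)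
      - (((Q w)⁻¹ • (polarBilin Q w)).smulRight w) with hfdef
  have hfx : ∀ x : V, f x = x - ((Q v)⁻¹ * polar Q v x) • v - ((Q w)⁻¹ * polar Q w x) • w := by
    intro x
    simp [hfdef, LinearMap.smulRight_apply, smul_eq_mul, polarBilin_apply_apply]
  have hpself : ∀ u : V, polar Q u u = 2 * Q u := by
    intro u; rw [polar_self]; push_cast [nsmul_eq_mul]; ring
  -- f is an involution
  have hinv : ∀ x : V, f (f x) = x := by
    intro x
    rw [hfx x, hfx _]
    have h1 : polar Q v (x - ((Q v)⁻¹ * polar Q v x) • v - ((Q w)⁻¹ * polar Q w x) • w)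
        = -polar Q v x := by
      rw [polar_sub_right, polar_sub_right, polar_smul_right, polar_smul_right, hpself, hvw]
      simp only [smul_eq_mul]
      field_simp
      ring
    have h2 : polar Q w (x - ((Q v)⁻¹ * polar Q v x) • v - ((Q w)⁻¹ * polar Q w x) • w)
        = -polar Q w x := by
      rw [polar_sub_right, polar_sub_right, polar_smul_right, polar_smul_right, hpself, hwv]
      simp only [smul_eq_mul]
      field_simp
      ring
    rw [h1, h2]
    match_scalars <;> (field_simp; try ring)
  -- f preserves Q
  have hQf : ∀ x : V, Q (f x) = Q x := by
    intro x
    rw [hfx x]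
    have e1 : x - ((Q v)⁻¹ * polar Q v x) • v - ((Q w)⁻¹ * polar Q w x) • w
        = x + (-((Q v)⁻¹ * polar Q v x)) • v + (-((Q w)⁻¹ * polar Q w x)) • w := by
      module
    rw [e1, Qexp, Qexp, polar_add_left, polar_smul_left]
    rw [polar_comm Q x v, polar_comm Q x w]
    rw [hvw]
    field_simp
    ring
  have hinvol : Function.Involutive f := hinv
  let F : V ≃ₗ[ℚ] V := LinearEquiv.ofInvolutive f hinvol
  have hFcoe : (F : V →ₗ[ℚ] V) = f := rfl
  have hFx : ∀ x : V, F x = f x := fun _ => rfl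
  -- values of f
  have hfv : f v = -v := by
    rw [hfx, hpself, hwv]
    have : (Q v)⁻¹ * (2 * Q v) = 2 := by field_simp
    rw [this]
    match_scalars <;> norm_num
  have hfw : f w = -w := by
    rw [hfx, hpself, hvw]
    have : (Q w)⁻¹ * (2 * Q w) = 2 := by field_simp
    rw [this]
    match_scalars <;> norm_num
  have hfU : ∀ u : V, polar Q v u = 0 → polar Q w u = 0 → f u = u := by
    intro u h1 h2
    rw [hfx, h1, h2]
    simp
  -- linear independence of v, w
  have hvne : v ≠ 0 := fun h => hv (by rw [h]; exact QuadraticMap.map_zero Q)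
  have hwne : w ≠ 0 := fun h => hw (by rw [h]; exact QuadraticMap.map_zero Q)
  have hindep : LinearIndependent ℚ ![v, w] := by
    rw [LinearIndependent.pair_iff]
    intro s t hst
    have h1 : polar Q v (s • v + t • w) = polar Q v 0 := by rw [hst]
    rw [polar_add_right, polar_smul_right, polar_smul_right, hpself, hvw, polar_zero_right] at h1
    have hs : s = 0 := by
      have := h1
      simp only [smul_eq_mul, mul_zero, add_zero] at this
      rcases mul_eq_zero.mp this with h | h
      · exact h
      · exact absurd (by linarith : Q v = 0) hv
    have h2 : polar Q w (s • v + t • w) = polar Q w 0 := by rw [hst]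
    rw [polar_add_right, polar_smul_right, polar_smul_right, hpself, hwv, polar_zero_right] at h2
    have ht : t = 0 := by
      simp only [smul_eq_mul, mul_zero, zero_add] at h2
      rcases mul_eq_zero.mp h2 with h | h
      · exact h
      · exact absurd (by linarith : Q w = 0) hw
    exact ⟨hs, ht⟩
  -- the plane and its orthogonal complement
  set P : Submodule ℚ V := Submodule.span ℚ {v, w} with hPdef
  set U : Submodule ℚ V := LinearMap.ker (polarBilin Q v) ⊓ LinearMap.ker (polarBilin Q w)
    with hUdef
  have hmemU : ∀ x : V, x ∈ U ↔ polar Q v x = 0 ∧ polar Q w x = 0 := by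
    intro x
    simp [hUdef, LinearMap.mem_ker, polarBilin_apply_apply]
  have hcompl : IsCompl P U := by
    constructor
    · rw [Submodule.disjoint_def]
      intro x hxP hxU
      obtain ⟨a, b, hab⟩ := Submodule.mem_span_pair.mp hxP
      obtain ⟨h1, h2⟩ := (hmemU x).mp hxU
      rw [← hab, polar_add_right, polar_smul_right, polar_smul_right, hpself, hvw] at h1
      rw [← hab, polar_add_right, polar_smul_right, polar_smul_right, hpself, hwv] at h2
      simp only [smul_eq_mul, mul_zero, add_zero, zero_add] at h1 h2
      have ha : a = 0 := by
        rcases mul_eq_zero.mp h1 with h | h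
        · exact h
        · exact absurd (by linarith : Q v = 0) hv
      have hb : b = 0 := by
        rcases mul_eq_zero.mp h2 with h | h
        · exact h
        · exact absurd (by linarith : Q w = 0) hw
      rw [← hab, ha, hb]; simp
    · rw [codisjoint_iff, eq_top_iff]
      intro x _
      set p : V := ((2 * Q v)⁻¹ * polar Q v x) • v + ((2 * Q w)⁻¹ * polar Q w x) • w with hpdef
      have hpP : p ∈ P := Submodule.add_mem _
        (Submodule.smul_mem _ _ (Submodule.subset_span (by simp)))
        (Submodule.smul_mem _ _ (Submodule.subset_span (by simp)))
      have huU : x - p ∈ U := by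
        rw [hmemU]
        constructor
        · rw [hpdef, polar_sub_right, polar_add_right, polar_smul_right, polar_smul_right,
            hpself, hvw]
          simp only [smul_eq_mul]
          field_simp
          ring
        · rw [hpdef, polar_sub_right, polar_add_right, polar_smul_right, polar_smul_right,
            hpself, hwv]
          simp only [smul_eq_mul]
          field_simp
          ring
      have : x = p + (x - p) := by abel
      rw [this]
      exact Submodule.add_mem _ (Submodule.mem_sup_left hpP) (Submodule.mem_sup_right huU)
  -- determinant of f is 1
  set e := Submodule.prodEquivOfIsCompl P U hcompl with hedef
  set g : (P × U) →ₗ[ℚ] (P × U) := (-LinearMap.id).prodMap LinearMap.id with hgdef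
  have hfP : ∀ x ∈ P, f x = -x := by
    intro x hx
    obtain ⟨a, b, hab⟩ := Submodule.mem_span_pair.mp hx
    rw [← hab]
    rw [map_add, LinearMap.map_smul, LinearMap.map_smul, hfv, hfw]
    module
  have hconj : (e : (P × U) →ₗ[ℚ] V) ∘ₗ g ∘ₗ (e.symm : V →ₗ[ℚ] (P × U)) = f := by
    have key : ∀ pu : P × U, f (e pu) = e (g pu) := by
      rintro ⟨p, u⟩
      have he : e (p, u) = (p : V) + (u : V) := by
        simp [hedef, Submodule.coe_prodEquivOfIsCompl]
      have hg : g (p, u) = (-p, u) := by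
        simp [hgdef]
      have he2 : e (-p, u) = -(p : V) + (u : V) := by
        simp [hedef, Submodule.coe_prodEquivOfIsCompl]
      rw [he, hg, he2, map_add, hfP _ p.2, hfU _ ((hmemU _).mp u.2).1 ((hmemU _).mp u.2).2]
    apply LinearMap.ext
    intro x
    have := key (e.symm x)
    simp only [LinearEquiv.apply_symm_apply] at this
    simpa using this.symm
  have hrankP : finrank ℚ P = 2 := by
    have hrange : Set.range ![v, w] = {v, w} := by
      ext x
      simp [Fin.exists_fin_two, eq_comm]
      tauto
    have := finrank_span_eq_card (R := ℚ) hindep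
    rw [hrange] at this
    rw [hPdef, this]
    simp
  have hdetg : LinearMap.det g = 1 := by
    rw [hgdef, det_prodMap']
    have h1 : (-LinearMap.id : P →ₗ[ℚ] P) = (-1 : ℚ) • LinearMap.id := by
      ext x; simp
    rw [h1, LinearMap.det_smul, hrankP, LinearMap.det_id, LinearMap.det_id]
    norm_num
  have hdet : LinearMap.det (F : V →ₗ[ℚ] V) = 1 := by
    rw [hFcoe, ← hconj, LinearMap.det_conj, hdetg]
  -- use the commutation hypothesis
  have hcomm := hT F hdet (fun x => hQf x) v
  rw [hFx, hFx, hfv, _root_.map_neg] at hcomm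
  -- hcomm : -(T v) = f (T v)
  have heq : f (T v) = -(T v) := hcomm.symm
  rw [hfx] at heq
  set s' := (Q v)⁻¹ * polar Q v (T v) with hs'
  set t' := (Q w)⁻¹ * polar Q w (T v) with ht'
  rw [Submodule.mem_span_pair]
  refine ⟨2⁻¹ * s', 2⁻¹ * t', ?_⟩
  have h6 : (2 : ℚ) • T v - (s' • v + t' • w) = 0 := by
    have h7 : T v - s' • v - t' • w + T v = 0 := by
      rw [heq]; abel
    rw [← h7]; module
  have h8 : (2 : ℚ) • T v = s' • v + t' • w := by
    rwa [sub_eq_zero] at h6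
  have h9 := congrArg (fun z => (2⁻¹ : ℚ) • z) h8
  simp only [smul_smul, smul_add] at h9
  norm_num at h9
  rw [h9]
  module

/-- Spanning by anisotropic vectors inside a suitable submodule. -/
private theorem aux_span (Q : QuadraticForm ℚ V) (W : Submodule ℚ V)
    (hW : ∀ x ∈ W, x ≠ 0 → ∃ y ∈ W, polar Q x y ≠ 0) :
    ∀ x ∈ W, x ∈ Submodule.span ℚ {u : V | u ∈ W ∧ Q u ≠ 0} := by
  intro x hxW
  by_cases hx : Q x ≠ 0
  · exact Submodule.subset_span ⟨hxW, hx⟩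
  push_neg at hx
  by_cases hx0 : x = 0
  · rw [hx0]; exact Submodule.zero_mem _
  obtain ⟨y, hyW, hpxy⟩ := hW x hxW hx0
  by_cases hy : Q y = 0
  · -- x = ½(x+y) + ½(x−y), both anisotropic
    have h1 : Q (x + y) ≠ 0 := by
      have : Q (x + y) = polar Q x y + Q x + Q y := by rw [QuadraticMap.polar]; ring
      rw [this, hx, hy]; simpa using hpxy
    have h2 : Q (x - y) ≠ 0 := by
      have hxy : x - y = x + (-1 : ℚ) • y := by module
      rw [hxy, Qexp, hx, hy]
      simpa using hpxy
    have hx1 : x + y ∈ W := W.add_mem hxW hyW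
    have hx2 : x - y ∈ W := W.sub_mem hxW hyW
    have hrw : x = (2⁻¹ : ℚ) • (x + y) + (2⁻¹ : ℚ) • (x - y) := by
      match_scalars <;> norm_num
    rw [hrw]
    exact Submodule.add_mem _
      (Submodule.smul_mem _ _ (Submodule.subset_span ⟨hx1, h1⟩))
      (Submodule.smul_mem _ _ (Submodule.subset_span ⟨hx2, hy ▸ h2⟩))
  · -- Q y ≠ 0 : pick t with Q(x + t y) ≠ 0
    obtain ⟨t, ht0, htQ⟩ : ∃ t : ℚ, t ≠ 0 ∧ Q (x + t • y) ≠ 0 := by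
      by_cases h1 : polar Q x y + Q y ≠ 0
      · refine ⟨1, one_ne_zero, ?_⟩
        rw [Qexp, hx]
        simpa using h1
      · push_neg at h1
        refine ⟨2, two_ne_zero, ?_⟩
        rw [Qexp, hx]
        intro hcon
        have : Q y = 0 := by linarith
        exact hy this
    have hmem : x + t • y ∈ W := W.add_mem hxW (W.smul_mem _ hyW)
    have hrw : x = (x + t • y) - t • y := by module
    rw [hrw]
    exact Submodule.sub_mem _
      (Submodule.subset_span ⟨hmem, htQ⟩)
      (Submodule.smul_mem _ _ (Submodule.subset_span ⟨hyW, hy⟩))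

end Aux

/-- Schur-type commutant statement: a linear map commuting with every determinant-one
isometry of a nondegenerate rational quadratic form in dimension at least `3` is a
scalar multiple of the identity. -/
theorem commutant_of_special_orthogonal_is_scalar {V : Type*} [AddCommGroup V]
    [Module ℚ V] [FiniteDimensional ℚ V] (hdim : 3 ≤ Module.finrank ℚ V)
    (Q : QuadraticForm ℚ V)
    (hnd : ∀ v : V, (∀ w : V, Q (v + w) - Q v - Q w = 0) → v = 0)
    (T : V →ₗ[ℚ] V)
    (hT : ∀ f : V ≃ₗ[ℚ] V, LinearMap.det (f : V →ₗ[ℚ] V) = 1 →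
      (∀ v : V, Q (f v) = Q v) → ∀ v : V, T (f v) = f (T v)) :
    ∃ c : ℚ, ∀ v : V, T v = c • v := by
  classical
  have hpself : ∀ u : V, polar Q u u = 2 * Q u := by
    intro u; rw [polar_self]; push_cast [nsmul_eq_mul]; ring
  have hnd' : ∀ v : V, v ≠ 0 → ∃ z : V, polar Q v z ≠ 0 := by
    intro v hv
    by_contra h
    push_neg at h
    exact hv (hnd v fun z => h z)
  -- eigenvector step
  have heig : ∀ v : V, Q v ≠ 0 → ∃ a : ℚ, T v = a • v := by
    intro v hv
    set Uv : Submodule ℚ V := LinearMap.ker (polarBilin Q v) with hUvdef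
    have hmemUv : ∀ x : V, x ∈ Uv ↔ polar Q v x = 0 := by
      intro x; simp [hUvdef, LinearMap.mem_ker, polarBilin_apply_apply]
    have hvne : v ≠ 0 := fun h => hv (by rw [h]; exact QuadraticMap.map_zero Q)
    -- finrank Uv ≥ 2
    have hrankUv : 2 ≤ Module.finrank ℚ Uv := by
      have hrange : LinearMap.range (polarBilin Q v) = ⊤ := by
        rw [eq_top_iff]
        intro c _
        refine ⟨(c / (2 * Q v)) • v, ?_⟩
        rw [LinearMap.map_smul]
        simp only [polarBilin_apply_apply, smul_eq_mul]
        rw [hpself]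
        field_simp
      have := LinearMap.finrank_range_add_finrank_ker (polarBilin Q v)
      rw [hrange] at this
      rw [← hUvdef] at this
      have h1 : Module.finrank ℚ (⊤ : Submodule ℚ ℚ) = 1 := by
        rw [finrank_top, Module.finrank_self]
      omega
    -- anisotropic vectors of Uv span Uv
    have hspanUv : ∀ x ∈ Uv, x ∈ Submodule.span ℚ {u : V | u ∈ Uv ∧ Q u ≠ 0} := by
      apply aux_span
      intro x hxUv hx0
      obtain ⟨z, hz⟩ := hnd' x hx0
      refine ⟨z - ((2 * Q v)⁻¹ * polar Q v z) • v, ?_, ?_⟩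
      · rw [hmemUv, polar_sub_right, polar_smul_right, hpself]
        simp only [smul_eq_mul]
        field_simp
        ring
      · rw [polar_sub_right, polar_smul_right]
        have hxv : polar Q x v = 0 := (polar_comm _ _ _).trans ((hmemUv x).mp hxUv)
        rw [hxv]
        simpa using hz
    -- existence of an anisotropic element of Uv
    have hexW : ∃ w₁ : V, w₁ ∈ Uv ∧ Q w₁ ≠ 0 := by
      by_contra h
      push_neg at h
      have hempty : {u : V | u ∈ Uv ∧ Q u ≠ 0} = ∅ := by
        ext u; simp only [Set.mem_setOf_eq, Set.mem_empty_iff_false, iff_false, not_and]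
        intro hu; simpa using h u hu
      have : ∀ x ∈ Uv, x = 0 := by
        intro x hx
        have := hspanUv x hx
        rw [hempty, Submodule.span_empty, Submodule.mem_bot] at this
        exact this
      have hUvbot : Uv = ⊥ := by
        rw [eq_bot_iff]; intro x hx; exact (Submodule.mem_bot ℚ).mpr (this x hx)
      rw [hUvbot] at hrankUv
      simp [finrank_bot] at hrankUv
    obtain ⟨w₁, hw₁Uv, hw₁⟩ := hexW
    have hw₁ne : w₁ ≠ 0 := fun h => hw₁ (by rw [h]; exact QuadraticMap.map_zero Q)
    -- T v ∈ span {v, w} for all anisotropic w ∈ Uv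
    have hTvspan : ∀ w : V, w ∈ Uv → Q w ≠ 0 → T v ∈ Submodule.span ℚ {v, w} := by
      intro w hwUv hw
      exact aux_mem_span Q T hT v w hv hw ((hmemUv w).mp hwUv)
    obtain ⟨a, b, hab⟩ := Submodule.mem_span_pair.mp (hTvspan w₁ hw₁Uv hw₁)
    by_cases hb : b = 0
    · exact ⟨a, by rw [← hab, hb]; simp⟩
    exfalso
    -- every anisotropic w in Uv is a multiple of w₁
    have hmul : ∀ w : V, w ∈ Uv → Q w ≠ 0 → w ∈ Submodule.span ℚ {w₁} := by
      intro w hwUv hw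
      obtain ⟨a', b', hab'⟩ := Submodule.mem_span_pair.mp (hTvspan w hwUv hw)
      -- b • w₁ = (a' - a) • v + b' • w
      have hkey : b • w₁ = (a' - a) • v + b' • w := by
        have : a' • v + b' • w = a • v + b • w₁ := by rw [hab', hab]
        have h2 : a' • v + b' • w - a • v = b • w₁ := by rw [this]; abel
        rw [← h2]; module
      -- apply polar Q v
      have hpol : polar Q v (b • w₁) = polar Q v ((a' - a) • v + b' • w) := by rw [hkey]
      rw [polar_smul_right, polar_add_right, polar_smul_right, polar_smul_right,
        (hmemUv w₁).mp hw₁Uv, hpself, (hmemUv w).mp hwUv] at hpol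
      simp only [smul_eq_mul, mul_zero, add_zero] at hpol
      have ha' : a' - a = 0 := by
        rcases mul_eq_zero.mp hpol.symm with h | h
        · exact h
        · exact absurd (by linarith : Q v = 0) hv
      rw [ha'] at hkey
      simp only [zero_smul, zero_add] at hkey
      -- b • w₁ = b' • w with b ≠ 0
      have hb' : b' ≠ 0 := by
        intro h
        rw [h, zero_smul] at hkey
        have : w₁ = 0 := by
          have := hkey
          rcases smul_eq_zero.mp this with h' | h'
          · exact absurd h' hb
          · exact h'
        exact hw₁ne this
      have : w = (b / b') • w₁ := by
        have h3 := congrArg (fun z => (b'⁻¹ : ℚ) • z) hkey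
        simp only [smul_smul] at h3
        rw [inv_mul_cancel₀ hb'] at h3
        rw [one_smul] at h3
        rw [← h3]
        congr 1
        field_simp
      rw [this]
      exact Submodule.smul_mem _ _ (Submodule.mem_span_singleton_self w₁)
    -- hence Uv ⊆ span {w₁}, contradicting finrank Uv ≥ 2
    have hle : Uv ≤ Submodule.span ℚ {w₁} := by
      intro x hx
      have hx' := hspanUv x hx
      have hsub : {u : V | u ∈ Uv ∧ Q u ≠ 0} ⊆ (Submodule.span ℚ {w₁} : Submodule ℚ V) := by
        rintro u ⟨hu1, hu2⟩
        exact hmul u hu1 hu2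
      exact Submodule.span_le.mpr hsub hx'
    have := Submodule.finrank_mono hle
    rw [finrank_span_singleton hw₁ne] at this
    omega
  -- existence of an anisotropic vector
  have hex : ∃ v₀ : V, Q v₀ ≠ 0 := by
    by_contra h
    push_neg at h
    have hall : ∀ x : V, x = 0 := by
      intro x
      apply hnd
      intro z
      rw [h x, h z, h (x + z)]
      ring
    have : Subsingleton V := ⟨fun a b => by rw [hall a, hall b]⟩
    rw [Module.finrank_zero_of_subsingleton] at hdim
    omega
  obtain ⟨v₀, hv₀⟩ := hex
  have hv₀ne : v₀ ≠ 0 := fun h => hv₀ (by rw [h]; exact QuadraticMap.map_zero Q)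
  obtain ⟨c, hc⟩ := heig v₀ hv₀
  refine ⟨c, ?_⟩
  -- all anisotropic vectors have eigenvalue c
  have hconst : ∀ v : V, Q v ≠ 0 → T v = c • v := by
    intro v hv
    by_cases hs : ∃ s : ℚ, v = s • v₀
    · obtain ⟨s, rfl⟩ := hs
      rw [LinearMap.map_smul, hc, smul_smul, smul_smul, mul_comm]
    · obtain ⟨a, ha⟩ := heig v hv
      have key : ∀ t : ℚ, t ≠ 0 → Q (v₀ + t • v) ≠ 0 → a = c := by
        intro t ht0 htQ
        obtain ⟨b, hb⟩ := heig _ htQ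
        have h1 : T (v₀ + t • v) = c • v₀ + (t * a) • v := by
          rw [map_add, LinearMap.map_smul, hc, ha, smul_smul]
        rw [hb] at h1
        -- b • v₀ + (t*b) • v = c • v₀ + (t*a) • v
        have h3 : b • v₀ + (t * b) • v = c • v₀ + (t * a) • v := by
          rw [← h1]; module
        have h2 : (b - c) • v₀ = (t * (a - b)) • v := by
          calc (b - c) • v₀ = (b • v₀ + (t * b) • v) - (c • v₀ + (t * b) • v) := by module
            _ = (c • v₀ + (t * a) • v) - (c • v₀ + (t * b) • v) := by rw [h3]
            _ = (t * (a - b)) • v := by module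
        by_cases hab : a = b
        · rw [hab] at h2
          simp only [sub_self, mul_zero, zero_smul] at h2
          rcases smul_eq_zero.mp h2 with h | h
          · rw [hab]
            exact sub_eq_zero.mp h
          · exact absurd h hv₀ne
        · exfalso
          apply hs
          have hne : t * (a - b) ≠ 0 := mul_ne_zero ht0 (sub_ne_zero.mpr hab)
          refine ⟨(b - c) / (t * (a - b)), ?_⟩
          have h5 := congrArg (fun z => ((t * (a - b))⁻¹ : ℚ) • z) h2
          simp only [smul_smul] at h5
          rw [inv_mul_cancel₀ hne, one_smul] at h5
          rw [← h5]
          congr 1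
          field_simp
      by_cases h1 : Q (v₀ + (1 : ℚ) • v) ≠ 0
      · rw [ha, key 1 one_ne_zero h1]
      by_cases h2 : Q (v₀ + (2 : ℚ) • v) ≠ 0
      · rw [ha, key 2 two_ne_zero h2]
      by_cases h3 : Q (v₀ + (3 : ℚ) • v) ≠ 0
      · rw [ha, key 3 three_ne_zero h3]
      exfalso
      push_neg at h1 h2 h3
      rw [Qexp] at h1 h2 h3
      have : Q v = 0 := by linarith
      exact hv this
  -- anisotropic vectors span V
  have hspan : ∀ x : V, x ∈ Submodule.span ℚ {u : V | u ∈ (⊤ : Submodule ℚ V) ∧ Q u ≠ 0} := by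
    intro x
    apply aux_span Q ⊤ _ x Submodule.mem_top
    intro y _ hy0
    obtain ⟨z, hz⟩ := hnd' y hy0
    exact ⟨z, Submodule.mem_top, hz⟩
  intro x
  have hsub : {u : V | u ∈ (⊤ : Submodule ℚ V) ∧ Q u ≠ 0}
      ⊆ (LinearMap.ker (T - c • LinearMap.id) : Submodule ℚ V) := by
    rintro u ⟨_, hu⟩
    rw [SetLike.mem_coe, LinearMap.mem_ker]
    simp only [LinearMap.sub_apply, LinearMap.smul_apply, LinearMap.id_apply]
    rw [hconst u hu, sub_self]
  have hx := Submodule.span_le.mpr hsub (hspan x)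
  rw [LinearMap.mem_ker] at hx
  simp only [LinearMap.sub_apply, LinearMap.smul_apply, LinearMap.id_apply] at hx
  exact sub_eq_zero.mp hx
end
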